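/- Let f : [n] → ℕ₊ be access frequencies with Σ_x f_x = m, and assign priorities pri_x = −⌊log₂ log₂(m/f_x)⌋ + δ_x with δ_x i.i.d. uniform on (0,1). Then in the resulting treap, each item x has expected depth O(log(m/f_x)), and hence the expected total access cost Σ_x f_x · E[depth(x)] is O(Σ_x f_x log(m/f_x)). -/

import Mathlib

open MeasureTheory

/-- Depth of item `x` in the treap over `Fin n` with priorities `pri`. -/
noncomputable def treapDepth (n : ℕ) (pri : Fin n → ℝ) (x : Fin n) : ℕ :=
  (Finset.univ.filter fun y : Fin n =>
    ∀ z : Fin n, min x y ≤ z → z ≤ max x y → pri z ≤ pri y).card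

namespace Stmt5Aux

noncomputable def unif : Measure ℝ := volume.restrict (Set.Icc (0:ℝ) 1)

lemma unif_apply (s : Set ℝ) : unif s = volume (s ∩ Set.Icc 0 1) :=
  Measure.restrict_apply' measurableSet_Icc

instance : IsProbabilityMeasure unif := by
  constructor
  rw [unif_apply]
  simp [Real.volume_Icc]

noncomputable def μpi (n : ℕ) : Measure (Fin n → ℝ) :=
  Measure.pi fun _ : Fin n => (volume : Measure ℝ).restrict (Set.Icc 0 1)

lemma μpi_eq (n : ℕ) : μpi n = Measure.pi fun _ : Fin n => unif := rfl

instance (n : ℕ) : IsProbabilityMeasure (μpi n) := by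
  rw [μpi_eq]; infer_instance

/-- measure of an event fixing finitely many coordinates -/
lemma measure_pi_event {n : ℕ} (K : Finset (Fin n)) (s : Fin n → Set ℝ)
    (hs : ∀ i, MeasurableSet (s i)) :
    μpi n {δ | ∀ i ∈ K, δ i ∈ s i} = ∏ i ∈ K, unif (s i) := by
  classical
  have hset : {δ : Fin n → ℝ | ∀ i ∈ K, δ i ∈ s i} =
      Set.pi Set.univ (fun i => if i ∈ K then s i else Set.univ) := by
    ext δ
    simp only [Set.mem_setOf_eq, Set.mem_pi, Set.mem_univ, forall_true_left]
    constructor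
    · intro h i
      by_cases hi : i ∈ K <;> simp [hi, h i]
    · intro h i hi
      have := h i
      simpa [hi] using this
  rw [hset, μpi_eq, Measure.pi_pi]
  have : ∀ i : Fin n, unif (if i ∈ K then s i else Set.univ) =
      if i ∈ K then unif (s i) else 1 := by
    intro i; by_cases hi : i ∈ K <;> simp [hi]
  simp_rw [this]
  rw [Finset.prod_ite_mem, Finset.univ_inter]

lemma unif_Iic_zero : unif (Set.Iic 0) = 0 := by
  rw [unif_apply]
  have : Set.Iic (0:ℝ) ∩ Set.Icc 0 1 = {0} := by
    ext t; simp only [Set.mem_inter_iff, Set.mem_Iic, Set.mem_Icc, Set.mem_singleton_iff]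
    constructor
    · rintro ⟨h1, h2, _⟩; linarith
    · rintro rfl; norm_num
  rw [this]; exact Real.volume_singleton

lemma unif_compl_Icc : unif (Set.Icc 0 1)ᶜ = 0 := by
  rw [unif_apply, Set.compl_inter_self]; simp

/-- single-coordinate marginal -/
lemma measure_single {n : ℕ} (w : Fin n) (s : Set ℝ) (hs : MeasurableSet s) :
    μpi n {δ | δ w ∈ s} = unif s := by
  classical
  have : {δ : Fin n → ℝ | δ w ∈ s} = {δ | ∀ i ∈ ({w} : Finset (Fin n)), δ i ∈ s} := by
    ext δ; simp
  rw [this, measure_pi_event _ (fun _ => s) (fun _ => hs), Finset.prod_singleton]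

/-- if the priority gap is ≥ 1, the event is null -/
lemma measure_shift_zero {n : ℕ} (z y : Fin n) (a : ℝ) (ha : 1 ≤ a) :
    μpi n {δ | a + δ z ≤ δ y} = 0 := by
  have hsub : {δ : Fin n → ℝ | a + δ z ≤ δ y} ⊆
      {δ | δ y ∈ (Set.Icc (0:ℝ) 1)ᶜ} ∪ {δ | δ z ∈ Set.Iic (0:ℝ)} := by
    intro δ hδ
    simp only [Set.mem_setOf_eq] at hδ
    by_cases hy : δ y ∈ Set.Icc (0:ℝ) 1
    · right
      simp only [Set.mem_setOf_eq, Set.mem_Iic]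
      have := hy.2
      linarith
    · left; exact hy
  refine le_antisymm ?_ zero_le
  calc μpi n {δ | a + δ z ≤ δ y} ≤ _ := measure_mono hsub
    _ ≤ μpi n {δ | δ y ∈ (Set.Icc (0:ℝ) 1)ᶜ} + μpi n {δ | δ z ∈ Set.Iic (0:ℝ)} :=
        measure_union_le _ _
    _ = 0 := by
        rw [measure_single _ _ measurableSet_Icc.compl, measure_single _ _ measurableSet_Iic,
          unif_compl_Icc, unif_Iic_zero, add_zero]

-- the Riemann-sum numeric bound
lemma riemann_bound (k N : ℕ) (hk : 1 ≤ k) (hN : 1 ≤ N) :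
    ∑ i ∈ Finset.range N, (1/(N:ℝ)) * (((i:ℝ)+1)/N)^(k-1) ≤ ((N:ℝ)+1)^k / (k * N^k) := by
  have hNpos : (0:ℝ) < N := by exact_mod_cast hN
  have key : ∀ i : ℕ, (k:ℝ) * ((i:ℝ)+1)^(k-1) ≤ ((i:ℝ)+2)^k - ((i:ℝ)+1)^k := by
    intro i
    have hx : (-2:ℝ) ≤ 1/((i:ℝ)+1) := by
      have : (0:ℝ) < 1/((i:ℝ)+1) := by positivity
      linarith
    have h1 : (1:ℝ) + k * (1/((i:ℝ)+1)) ≤ (1 + 1/((i:ℝ)+1))^k := one_add_mul_le_pow hx k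
    have hip : (0:ℝ) < (i:ℝ)+1 := by positivity
    have h2 : ((i:ℝ)+1)^k * (1 + k * (1/((i:ℝ)+1))) ≤ ((i:ℝ)+1)^k * (1 + 1/((i:ℝ)+1))^k :=
      mul_le_mul_of_nonneg_left h1 (by positivity)
    have e1 : ((i:ℝ)+1)^k * (1 + 1/((i:ℝ)+1))^k = ((i:ℝ)+2)^k := by
      rw [← mul_pow]; congr 1; field_simp; ring
    have e2 : ((i:ℝ)+1)^k * (1 + k * (1/((i:ℝ)+1))) = ((i:ℝ)+1)^k + k * ((i:ℝ)+1)^(k-1) := by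
      have : ((i:ℝ)+1)^k = ((i:ℝ)+1)^(k-1) * ((i:ℝ)+1) := by
        rw [← pow_succ]; congr 1; omega
      rw [mul_add, mul_one, this]; field_simp
    rw [e1, e2] at h2
    linarith
  have hsum : (k:ℝ) * ∑ i ∈ Finset.range N, ((i:ℝ)+1)^(k-1) ≤ ((N:ℝ)+1)^k := by
    rw [Finset.mul_sum]
    calc ∑ i ∈ Finset.range N, (k:ℝ) * ((i:ℝ)+1)^(k-1)
        ≤ ∑ i ∈ Finset.range N, (((i:ℝ)+2)^k - ((i:ℝ)+1)^k) :=
          Finset.sum_le_sum fun i _ => key i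
      _ = ((N:ℝ)+1)^k - 1 := by
          have h := Finset.sum_range_sub (fun j : ℕ => ((j:ℝ)+1)^k) N
          have e : ∀ i ∈ Finset.range N,
              (((i:ℝ)+2)^k - ((i:ℝ)+1)^k) = ((((i+1:ℕ)):ℝ)+1)^k - (((i:ℕ):ℝ)+1)^k := by
            intro i _; push_cast; ring_nf
          rw [Finset.sum_congr rfl e, h]; norm_num
      _ ≤ ((N:ℝ)+1)^k := by linarith
  have hterm : ∀ i ∈ Finset.range N, (1/(N:ℝ)) * (((i:ℝ)+1)/N)^(k-1)
      = ((i:ℝ)+1)^(k-1) / N^k := by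
    intro i _
    rw [div_pow]
    have : (N:ℝ)^(k-1) * N = N^k := by
      rw [← pow_succ]; congr 1; omega
    field_simp
    rw [← this]; ring
  rw [Finset.sum_congr rfl hterm, ← Finset.sum_div]
  rw [div_le_div_iff₀ (by positivity) (by positivity)]
  have hkpos : (0:ℝ) < k := by exact_mod_cast hk
  calc (∑ i ∈ Finset.range N, ((i:ℝ)+1)^(k-1)) * ((k:ℝ) * N^k)
      = ((k:ℝ) * ∑ i ∈ Finset.range N, ((i:ℝ)+1)^(k-1)) * N^k := by ring
    _ ≤ ((N:ℝ)+1)^k * N^k := by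
        apply mul_le_mul_of_nonneg_right hsum (by positivity)

/-- key lemma: probability that δ y is max over S is at most 1/|S| -/
lemma measure_le_inv_card {n : ℕ} (S : Finset (Fin n)) (y : Fin n) (hy : y ∈ S) :
    (μpi n {δ | ∀ z ∈ S, δ z ≤ δ y}).toReal ≤ 1 / S.card := by
  classical
  set k := S.card with hk
  have hk1 : 1 ≤ k := Finset.card_pos.mpr ⟨y, hy⟩
  set E := {δ : Fin n → ℝ | ∀ z ∈ S, δ z ≤ δ y} with hE
  -- step A: bound for each N
  have stepA : ∀ N : ℕ, 1 ≤ N → (μpi n E).toReal ≤ ((N:ℝ)+1)^k / (k * N^k) := by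
    intro N hN
    have hNpos : (0:ℝ) < N := by exact_mod_cast hN
    set s : ℕ → Fin n → Set ℝ := fun i z =>
      if z = y then Set.Icc ((i:ℝ)/N) (((i:ℝ)+1)/N) else Set.Iic (((i:ℝ)+1)/N) with hs
    have hsmeas : ∀ i z, MeasurableSet (s i z) := by
      intro i z; by_cases h : z = y <;> simp [hs, h, measurableSet_Icc, measurableSet_Iic]
    have hcover : E ⊆ (⋃ i ∈ Finset.range N, {δ | ∀ z ∈ S, δ z ∈ s i z}) ∪
        {δ : Fin n → ℝ | δ y ∈ (Set.Icc (0:ℝ) 1)ᶜ} := by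
      intro δ hδ
      by_cases hyIcc : δ y ∈ Set.Icc (0:ℝ) 1
      · left
        obtain ⟨h0, h1⟩ := hyIcc
        -- choose i = min ⌊δ y * N⌋₊ (N-1)
        set i := min ⌊δ y * N⌋₊ (N-1) with hi
        have hiN : i ∈ Finset.range N := by
          simp only [Finset.mem_range, hi]
          omega
        refine Set.mem_biUnion hiN ?_
        intro z hz
        have hylb : (i:ℝ)/N ≤ δ y := by
          rcases min_cases ⌊δ y * N⌋₊ (N-1) with ⟨h, _⟩ | ⟨h, _⟩
          · rw [hi, h]
            rw [div_le_iff₀ hNpos]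
            exact (Nat.floor_le (by positivity)).trans (le_refl _)
          · rw [hi, h]
            rw [div_le_iff₀ hNpos]
            have h2 : N ≤ ⌊δ y * N⌋₊ := by omega
            have h3 : (N:ℝ) ≤ δ y * N :=
              le_trans (Nat.cast_le.mpr h2) (Nat.floor_le (by positivity))
            have h4 : ((N-1:ℕ):ℝ) ≤ (N:ℝ) := by
              have := Nat.sub_le N 1
              exact_mod_cast this
            linarith
        have hyub : δ y ≤ ((i:ℝ)+1)/N := by
          rcases min_cases ⌊δ y * N⌋₊ (N-1) with ⟨h, _⟩ | ⟨h, hle⟩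
          · rw [hi, h]
            rw [le_div_iff₀ hNpos]
            exact (Nat.lt_floor_add_one (δ y * N)).le
          · rw [hi, h]
            have : ((N:ℝ)-1)+1 = N := by ring
            rw [le_div_iff₀ hNpos]
            have : ((N-1:ℕ):ℝ) + 1 = N := by
              have : 1 ≤ N := hN
              push_cast [Nat.cast_sub this]
              ring
            rw [this]
            calc δ y * N ≤ 1 * N := by apply mul_le_mul_of_nonneg_right h1 hNpos.le
              _ = N := one_mul _
        by_cases hzy : z = y
        · subst hzy
          simp only [hs, if_pos rfl]
          exact ⟨hylb, hyub⟩
        · simp only [hs, if_neg hzy, Set.mem_Iic]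
          exact (hδ z hz).trans hyub
      · right; exact hyIcc
    have hDmeas : ∀ i : ℕ, μpi n {δ | ∀ z ∈ S, δ z ∈ s i z}
        ≤ ENNReal.ofReal ((1/(N:ℝ)) * (((i:ℝ)+1)/N)^(k-1)) := by
      intro i
      rw [measure_pi_event S (s i) (hsmeas i)]
      rw [← Finset.mul_prod_erase S _ hy]
      have h1 : unif (s i y) ≤ ENNReal.ofReal (1/N) := by
        simp only [hs, if_pos rfl]
        rw [unif_apply]
        calc volume (Set.Icc ((i:ℝ)/N) (((i:ℝ)+1)/N) ∩ Set.Icc 0 1)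
            ≤ volume (Set.Icc ((i:ℝ)/N) (((i:ℝ)+1)/N)) := measure_mono Set.inter_subset_left
          _ = ENNReal.ofReal (((i:ℝ)+1)/N - i/N) := Real.volume_Icc
          _ = ENNReal.ofReal (1/N) := by congr 1; field_simp; ring
      have h2 : ∀ z ∈ S.erase y, unif (s i z) ≤ ENNReal.ofReal (((i:ℝ)+1)/N) := by
        intro z hz
        have hzy : z ≠ y := Finset.ne_of_mem_erase hz
        simp only [hs, if_neg hzy]
        rw [unif_apply]
        calc volume (Set.Iic (((i:ℝ)+1)/N) ∩ Set.Icc 0 1)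
            ≤ volume (Set.Icc (0:ℝ) (((i:ℝ)+1)/N)) := by
              apply measure_mono
              rintro t ⟨ht1, ht2, _⟩
              exact ⟨ht2, ht1⟩
          _ = ENNReal.ofReal (((i:ℝ)+1)/N - 0) := Real.volume_Icc
          _ = ENNReal.ofReal (((i:ℝ)+1)/N) := by norm_num
      calc unif (s i y) * ∏ z ∈ S.erase y, unif (s i z)
          ≤ ENNReal.ofReal (1/N) * ∏ z ∈ S.erase y, ENNReal.ofReal (((i:ℝ)+1)/N) := by
            apply mul_le_mul' h1
            exact Finset.prod_le_prod' h2
        _ = ENNReal.ofReal (1/N) * (ENNReal.ofReal (((i:ℝ)+1)/N))^(k-1) := by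
            rw [Finset.prod_const, Finset.card_erase_of_mem hy, hk]
        _ = ENNReal.ofReal ((1/(N:ℝ)) * (((i:ℝ)+1)/N)^(k-1)) := by
            rw [← ENNReal.ofReal_pow (by positivity), ← ENNReal.ofReal_mul (by positivity)]
    have : μpi n E ≤ ENNReal.ofReal (((N:ℝ)+1)^k / (k * N^k)) := by
      calc μpi n E ≤ μpi n ((⋃ i ∈ Finset.range N, {δ | ∀ z ∈ S, δ z ∈ s i z}) ∪
          {δ : Fin n → ℝ | δ y ∈ (Set.Icc (0:ℝ) 1)ᶜ}) := measure_mono hcover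
        _ ≤ μpi n (⋃ i ∈ Finset.range N, {δ | ∀ z ∈ S, δ z ∈ s i z}) +
            μpi n {δ : Fin n → ℝ | δ y ∈ (Set.Icc (0:ℝ) 1)ᶜ} := measure_union_le _ _
        _ ≤ (∑ i ∈ Finset.range N, μpi n {δ | ∀ z ∈ S, δ z ∈ s i z}) + 0 := by
            apply add_le_add
            · exact measure_biUnion_finset_le _ _
            · rw [measure_single _ _ measurableSet_Icc.compl, unif_compl_Icc]
        _ = ∑ i ∈ Finset.range N, μpi n {δ | ∀ z ∈ S, δ z ∈ s i z} := add_zero _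
        _ ≤ ∑ i ∈ Finset.range N, ENNReal.ofReal ((1/(N:ℝ)) * (((i:ℝ)+1)/N)^(k-1)) :=
            Finset.sum_le_sum fun i _ => hDmeas i
        _ = ENNReal.ofReal (∑ i ∈ Finset.range N, (1/(N:ℝ)) * (((i:ℝ)+1)/N)^(k-1)) :=
            (ENNReal.ofReal_sum_of_nonneg fun i _ => by positivity).symm
        _ ≤ ENNReal.ofReal (((N:ℝ)+1)^k / (k * N^k)) :=
            ENNReal.ofReal_le_ofReal (riemann_bound k N hk1 hN)
    exact ENNReal.toReal_le_of_le_ofReal (by positivity) this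
  -- step B: take the limit
  have htend : Filter.Tendsto (fun N : ℕ => ((N:ℝ)+1)^k / (k * N^k)) Filter.atTop
      (nhds (1/k)) := by
    have h1 : Filter.Tendsto (fun N : ℕ => (1 + 1/(N:ℝ))^k / k) Filter.atTop
        (nhds ((1+0)^k / k)) := by
      apply Filter.Tendsto.div_const
      apply Filter.Tendsto.pow
      exact tendsto_const_nhds.add tendsto_one_div_atTop_nhds_zero_nat
    have h2 : ((1:ℝ)+0)^k / k = 1/k := by norm_num
    rw [h2] at h1
    apply h1.congr'
    filter_upwards [Filter.eventually_ge_atTop 1] with N hN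
    have hNpos : (0:ℝ) < N := by exact_mod_cast hN
    rw [div_eq_div_iff (by positivity) (by positivity)]
    have : (1 + 1/(N:ℝ)) * N = N + 1 := by field_simp
    calc (1 + 1/(N:ℝ))^k * ((k:ℝ) * N^k) = ((1+1/(N:ℝ))*(N:ℝ))^k * k := by
          rw [mul_pow]; ring
      _ = ((N:ℝ)+1)^k * k := by rw [this]
  apply ge_of_tendsto htend
  filter_upwards [Filter.eventually_ge_atTop 1] with N hN
  exact stepA N hN

/-- the ancestor event -/
def A {n : ℕ} (c : Fin n → ℝ) (x y : Fin n) : Set (Fin n → ℝ) :=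
  {δ | ∀ z : Fin n, min x y ≤ z → z ≤ max x y → c z + δ z ≤ c y + δ y}

lemma A_meas {n : ℕ} (c : Fin n → ℝ) (x y : Fin n) : MeasurableSet (A c x y) := by
  have h : A c x y = ⋂ z : Fin n,
      {δ : Fin n → ℝ | min x y ≤ z → z ≤ max x y → c z + δ z ≤ c y + δ y} := by
    ext δ; simp [A, Set.mem_iInter]
  rw [h]
  apply MeasurableSet.iInter
  intro z
  by_cases h1 : min x y ≤ z
  · by_cases h2 : z ≤ max x y
    · have : {δ : Fin n → ℝ | min x y ≤ z → z ≤ max x y → c z + δ z ≤ c y + δ y} =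
          {δ : Fin n → ℝ | c z + δ z ≤ c y + δ y} := by
        ext δ; simp [h1, h2]
      rw [this]
      exact measurableSet_le (measurable_const.add (measurable_pi_apply z))
        (measurable_const.add (measurable_pi_apply y))
    · have : {δ : Fin n → ℝ | min x y ≤ z → z ≤ max x y → c z + δ z ≤ c y + δ y} =
          Set.univ := by ext δ; simp [h2]
      rw [this]; exact MeasurableSet.univ
  · have : {δ : Fin n → ℝ | min x y ≤ z → z ≤ max x y → c z + δ z ≤ c y + δ y} =
        Set.univ := by ext δ; simp [h1]
    rw [this]; exact MeasurableSet.univ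

/-- expectation of the depth as a sum of event probabilities -/
lemma integral_eq_sum {n : ℕ} (c : Fin n → ℝ) (x : Fin n) :
    (∫ δ : Fin n → ℝ, (treapDepth n (fun y => c y + δ y) x : ℝ) ∂(μpi n))
      = ∑ y : Fin n, (μpi n (A c x y)).toReal := by
  have hrw : ∀ δ : Fin n → ℝ, (treapDepth n (fun y => c y + δ y) x : ℝ)
      = ∑ y : Fin n, (A c x y).indicator (fun _ => (1:ℝ)) δ := by
    intro δ
    unfold treapDepth
    rw [Finset.card_filter, Nat.cast_sum]
    apply Finset.sum_congr rfl
    intro y _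
    by_cases h : δ ∈ A c x y
    · have h' : ∀ z : Fin n, min x y ≤ z → z ≤ max x y →
          c z + δ z ≤ c y + δ y := h
      rw [if_pos h', Set.indicator_of_mem h]; norm_num
    · have h' : ¬ ∀ z : Fin n, min x y ≤ z → z ≤ max x y →
          c z + δ z ≤ c y + δ y := h
      rw [if_neg h', Set.indicator_of_notMem h]; norm_num
  calc (∫ δ : Fin n → ℝ, (treapDepth n (fun y => c y + δ y) x : ℝ) ∂(μpi n))
      = ∫ δ : Fin n → ℝ, (∑ y : Fin n, (A c x y).indicator (fun _ => (1:ℝ)) δ) ∂(μpi n) := by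
        apply integral_congr_ae
        filter_upwards with δ using hrw δ
    _ = ∑ y : Fin n, ∫ δ : Fin n → ℝ, (A c x y).indicator (fun _ => (1:ℝ)) δ ∂(μpi n) :=
        integral_finset_sum _ (fun y _ => (integrable_const (1:ℝ)).indicator (A_meas c x y))
    _ = ∑ y : Fin n, (μpi n (A c x y)).toReal := by
        apply Finset.sum_congr rfl
        intro y _
        rw [integral_indicator_const (1:ℝ) (A_meas c x y)]
        simp; rfl

lemma side_sum {n : ℕ} (V : Finset (Fin n)) (r : Fin n → ℕ) (Nt : ℕ)
    (hr1 : ∀ y ∈ V, 1 ≤ r y ∧ r y ≤ Nt)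
    (hinj : ∀ y1 ∈ V, ∀ y2 ∈ V, r y1 = r y2 → y1 = y2) :
    ∑ y ∈ V, (1:ℝ)/(r y) ≤ 1 + Real.log Nt := by
  classical
  calc ∑ y ∈ V, (1:ℝ)/(r y) = ∑ i ∈ V.image r, (1:ℝ)/i := by
        rw [Finset.sum_image hinj]
    _ ≤ ∑ i ∈ Finset.Icc 1 Nt, (1:ℝ)/i := by
        apply Finset.sum_le_sum_of_subset_of_nonneg
        · intro i hi
          obtain ⟨y, hy, rfl⟩ := Finset.mem_image.mp hi
          exact Finset.mem_Icc.mpr ⟨(hr1 y hy).1, (hr1 y hy).2⟩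
        · intros; positivity
    _ = (harmonic Nt : ℝ) := by
        rw [harmonic_eq_sum_Icc]
        push_cast
        simp [one_div]
    _ ≤ 1 + Real.log Nt := harmonic_le_one_add_log Nt

lemma geom_sum (k : ℕ) :
    ∑ t ∈ Finset.Icc (-(k:ℤ)) 0, (2:ℝ)^((1:ℝ)-(t:ℝ)) ≤ 4 * 2^k := by
  induction k with
  | zero =>
    simp only [Nat.cast_zero, neg_zero, Finset.Icc_self, Finset.sum_singleton]
    norm_num [Real.rpow_one]
  | succ k ih =>
    rw [show Finset.Icc (-((k+1:ℕ):ℤ)) 0 = insert (-((k+1:ℕ):ℤ)) (Finset.Icc (-(k:ℤ)) 0) by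
      ext t; simp only [Finset.mem_Icc, Finset.mem_insert]; push_cast; omega]
    rw [Finset.sum_insert (by simp only [Finset.mem_Icc]; push_cast; omega)]
    have hterm : (2:ℝ)^((1:ℝ)-(((-((k+1:ℕ):ℤ)) : ℤ):ℝ)) = 4 * 2^k := by
      have h1 : (1:ℝ)-(((-((k+1:ℕ):ℤ)) : ℤ):ℝ) = (k:ℝ) + 2 := by push_cast; ring
      rw [h1, Real.rpow_add two_pos, Real.rpow_natCast]
      have h2 : (2:ℝ)^(2:ℝ) = 4 := by
        rw [show (2:ℝ) = ((2:ℕ):ℝ) by norm_num, Real.rpow_natCast]; norm_num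
      rw [h2]; ring
    rw [hterm]
    calc (4:ℝ) * 2^k + ∑ t ∈ Finset.Icc (-(k:ℤ)) 0, (2:ℝ)^((1:ℝ)-(t:ℝ))
        ≤ 4 * 2^k + 4 * 2^k := by linarith
      _ = 4 * 2^(k+1) := by ring

set_option maxHeartbeats 1000000 in
lemma sum_bound {n m : ℕ} (f : Fin n → ℕ) (hf : ∀ y, 1 ≤ f y) (hm : (∑ y, f y) = m)
    (x : Fin n) :
    ∑ y : Fin n,
        (μpi n (A (fun y => -((⌊Real.logb 2 (Real.logb 2 ((m : ℝ) / (f y : ℝ)))⌋ : ℤ) : ℝ)) x y)).toReal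
      ≤ 100 * (1 + Real.log ((m : ℝ) / (f x : ℝ))) := by
  classical
  set c : Fin n → ℝ := fun y => -((⌊Real.logb 2 (Real.logb 2 ((m : ℝ) / (f y : ℝ)))⌋ : ℤ) : ℝ)
    with hc
  set b : Fin n → ℤ := fun y => -⌊Real.logb 2 (Real.logb 2 ((m : ℝ) / (f y : ℝ)))⌋ with hb
  have hcb : ∀ y, c y = (b y : ℝ) := by intro y; simp [hc, hb]
  -- basic positivity facts
  have hfm : ∀ y, f y ≤ m := by
    intro y
    rw [← hm]
    exact Finset.single_le_sum (fun i _ => Nat.zero_le _) (Finset.mem_univ y)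
  have hm1 : 1 ≤ m := le_trans (hf x) (hfm x)
  have hmpos : (0:ℝ) < m := by exact_mod_cast hm1
  have hfpos : ∀ y, (0:ℝ) < f y := fun y => by exact_mod_cast hf y
  have hl1 : ∀ y, (1:ℝ) ≤ (m:ℝ)/(f y) := by
    intro y
    rw [le_div_iff₀ (hfpos y), one_mul]
    exact_mod_cast hfm y
  have hlogx : 0 ≤ Real.log ((m:ℝ)/(f x)) := Real.log_nonneg (hl1 x)
  -- key numeric inequality
  have hkey : ∀ z, (m:ℝ)/(f z) < (2:ℝ)^((2:ℝ)^((1:ℝ) - (b z : ℝ))) := by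
    intro z
    have hl := hl1 z
    have hCpos : (0:ℝ) < (2:ℝ)^((2:ℝ)^((1:ℝ) - (b z : ℝ))) := Real.rpow_pos_of_pos two_pos _
    rcases eq_or_lt_of_le hl with h1 | h1
    · -- m / f z = 1
      have hbz : b z = 0 := by
        simp [hb, ← h1, Real.logb_one, Real.logb_zero, Int.floor_zero]
      rw [← h1, hbz]
      have : ((1:ℝ) - ((0:ℤ):ℝ)) = 1 := by norm_num
      rw [this, Real.rpow_one]
      have h4 : (2:ℝ)^(2:ℝ) = 4 := by
        rw [show (2:ℝ) = ((2:ℕ):ℝ) by norm_num, Real.rpow_natCast]; norm_num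
      rw [h4]; norm_num
    · -- 1 < m / f z
      have hv : 0 < Real.logb 2 ((m:ℝ)/(f z)) := Real.logb_pos one_lt_two h1
      set u := Real.logb 2 (Real.logb 2 ((m:ℝ)/(f z))) with hu
      have h2 : u < 1 - (b z : ℝ) := by
        have hfl := Int.lt_floor_add_one u
        have : (b z : ℝ) = -(⌊u⌋ : ℝ) := by simp [hb, hu]
        rw [this]; push_cast; linarith
      have h3 : Real.logb 2 ((m:ℝ)/(f z)) = (2:ℝ)^u :=
        (Real.rpow_logb two_pos (by norm_num) hv).symm
      have h4 : Real.logb 2 ((m:ℝ)/(f z)) < (2:ℝ)^((1:ℝ)-(b z:ℝ)) := by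
        rw [h3]
        exact (Real.rpow_lt_rpow_left_iff one_lt_two).mpr h2
      calc (m:ℝ)/(f z) = (2:ℝ)^(Real.logb 2 ((m:ℝ)/(f z))) :=
            (Real.rpow_logb two_pos (by norm_num) (by linarith)).symm
        _ < (2:ℝ)^((2:ℝ)^((1:ℝ)-(b z:ℝ))) :=
            (Real.rpow_lt_rpow_left_iff one_lt_two).mpr h4
  -- level counting
  set N : ℤ → ℕ := fun t => (Finset.univ.filter (fun z => b z = t)).card with hNdef
  have hN : ∀ t : ℤ, (N t : ℝ) ≤ (2:ℝ)^((2:ℝ)^((1:ℝ)-(t:ℝ))) := by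
    intro t
    set C := (2:ℝ)^((2:ℝ)^((1:ℝ)-(t:ℝ))) with hC
    have hCpos : (0:ℝ) < C := Real.rpow_pos_of_pos two_pos _
    have h1 : ∀ z ∈ Finset.univ.filter (fun z => b z = t), (m:ℝ)/C ≤ (f z : ℝ) := by
      intro z hz
      have hbz : b z = t := (Finset.mem_filter.mp hz).2
      have h2 := hkey z
      rw [hbz] at h2
      rw [div_le_iff₀ hCpos]
      rw [div_lt_iff₀ (hfpos z)] at h2
      nlinarith [hfpos z]
    have h2 : (N t : ℝ) * ((m:ℝ)/C) ≤ ∑ z ∈ Finset.univ.filter (fun z => b z = t), (f z:ℝ) := by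
      have := Finset.card_nsmul_le_sum (Finset.univ.filter (fun z => b z = t))
        (fun z => (f z:ℝ)) ((m:ℝ)/C) h1
      simpa [nsmul_eq_mul] using this
    have h3 : ∑ z ∈ Finset.univ.filter (fun z => b z = t), (f z:ℝ) ≤ (m:ℝ) := by
      have h4 : ∑ z ∈ Finset.univ.filter (fun z => b z = t), f z ≤ ∑ z, f z :=
        Finset.sum_le_sum_of_subset (Finset.filter_subset _ _)
      rw [hm] at h4
      exact_mod_cast h4
    have h5 : (N t:ℝ) * ((m:ℝ)/C) ≤ (m:ℝ) := h2.trans h3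
    have h6 : (N t:ℝ) ≤ (m:ℝ)/((m:ℝ)/C) := by
      rw [le_div_iff₀ (by positivity)]
      exact h5
    have h7 : (m:ℝ)/((m:ℝ)/C) = C := by field_simp
    rwa [h7] at h6
  have hlogN : ∀ t : ℤ, Real.log (N t) ≤ (2:ℝ)^((1:ℝ)-(t:ℝ)) * Real.log 2 := by
    intro t
    rcases Nat.eq_zero_or_pos (N t) with h | h
    · rw [h]
      simp only [Nat.cast_zero, Real.log_zero]
      positivity
    · have h1 : Real.log (N t) ≤ Real.log ((2:ℝ)^((2:ℝ)^((1:ℝ)-(t:ℝ)))) := by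
        apply Real.log_le_log (by exact_mod_cast h) (hN t)
      rwa [Real.log_rpow two_pos] at h1
  -- at most one item at levels ≥ 1
  have hhigh : (Finset.univ.filter (fun z : Fin n => 1 ≤ b z)).card ≤ 1 := by
    by_contra hcon
    push_neg at hcon
    obtain ⟨z1, hz1, z2, hz2, hne⟩ := Finset.one_lt_card.mp hcon
    have key2 : ∀ z : Fin n, 1 ≤ b z → (m:ℝ)/2 < f z := by
      intro z hz
      have h1 := hkey z
      have hbz : (1:ℝ) ≤ (b z : ℝ) := by exact_mod_cast hz
      have h2 : (2:ℝ)^((1:ℝ)-(b z:ℝ)) ≤ (2:ℝ)^(0:ℝ) := by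
        apply (Real.rpow_le_rpow_left_iff one_lt_two).mpr
        linarith
      rw [Real.rpow_zero] at h2
      have h3 : (2:ℝ)^((2:ℝ)^((1:ℝ)-(b z:ℝ))) ≤ (2:ℝ)^(1:ℝ) :=
        (Real.rpow_le_rpow_left_iff one_lt_two).mpr h2
      rw [Real.rpow_one] at h3
      have h4 : (m:ℝ)/(f z) < 2 := lt_of_lt_of_le h1 h3
      rw [div_lt_iff₀ (hfpos z)] at h4
      rw [div_lt_iff₀ (by norm_num : (0:ℝ) < 2)]
      linarith
    have h1 := key2 z1 (Finset.mem_filter.mp hz1).2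
    have h2 := key2 z2 (Finset.mem_filter.mp hz2).2
    have hsum2 : (f z1 : ℝ) + f z2 ≤ m := by
      have h3 := Finset.add_le_sum (f := fun z : Fin n => f z)
        (fun i _ => Nat.zero_le _) (Finset.mem_univ z1) (Finset.mem_univ z2) hne
      rw [hm] at h3
      exact_mod_cast h3
    linarith
  -- per-item quantities
  set T : Fin n → ℝ := fun y => (μpi n (A c x y)).toReal with hT
  have hT0 : ∀ y, 0 ≤ T y := fun y => ENNReal.toReal_nonneg
  have hT1 : ∀ y, T y ≤ 1 := by
    intro y
    calc T y ≤ (1 : ENNReal).toReal := ENNReal.toReal_mono ENNReal.one_ne_top prob_le_one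
      _ = 1 := by simp
  -- blocked items contribute 0
  have hblocked : ∀ y : Fin n,
      (∃ z : Fin n, (min x y ≤ z ∧ z ≤ max x y) ∧ b y < b z) → T y = 0 := by
    rintro y ⟨z, ⟨hz1, hz2⟩, hbz⟩
    have ha : (1:ℝ) ≤ (b z : ℝ) - (b y : ℝ) := by
      have : b y + 1 ≤ b z := hbz
      have h2 : ((b y : ℝ) + 1) ≤ (b z : ℝ) := by exact_mod_cast this
      linarith
    have hsub : A c x y ⊆ {δ : Fin n → ℝ | ((b z : ℝ) - (b y : ℝ)) + δ z ≤ δ y} := by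
      intro δ hδ
      have h1 := hδ z hz1 hz2
      rw [hcb z, hcb y] at h1
      simp only [Set.mem_setOf_eq]
      linarith
    have h0 : μpi n (A c x y) = 0 :=
      le_antisymm ((measure_mono hsub).trans (le_of_eq (measure_shift_zero z y _ ha)))
        zero_le
    simp [hT, h0]
  -- the interval-same-level finset
  set I : Fin n → Finset (Fin n) := fun y =>
    Finset.univ.filter (fun z => b z = b y ∧ min x y ≤ z ∧ z ≤ max x y ∧ z ≠ x) with hI
  have hyI : ∀ y, y ≠ x → y ∈ I y := by
    intro y hyx
    exact Finset.mem_filter.mpr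
      ⟨Finset.mem_univ y, rfl, min_le_right x y, le_max_right x y, hyx⟩
  have hrank : ∀ y, y ≠ x → T y ≤ 1/((I y).card) := by
    intro y hyx
    have hsub : A c x y ⊆ {δ : Fin n → ℝ | ∀ z ∈ I y, δ z ≤ δ y} := by
      intro δ hδ z hz
      obtain ⟨_, hbz, h1, h2, _⟩ := Finset.mem_filter.mp hz
      have h3 := hδ z h1 h2
      rw [hcb z, hcb y, hbz] at h3
      linarith
    calc T y ≤ (μpi n {δ : Fin n → ℝ | ∀ z ∈ I y, δ z ≤ δ y}).toReal :=
        ENNReal.toReal_mono (measure_ne_top _ _) (measure_mono hsub)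
      _ ≤ 1/((I y).card) := measure_le_inv_card (I y) y (hyI y hyx)
  have hIcard : ∀ y, (I y).card ≤ N (b y) := by
    intro y
    apply Finset.card_le_card
    intro z hz
    obtain ⟨hzu, hbz, _⟩ := Finset.mem_filter.mp hz
    exact Finset.mem_filter.mpr ⟨hzu, hbz⟩
  -- rank strict monotonicity on each side
  have hmono_right : ∀ y1 y2 : Fin n, x < y1 → x < y2 → b y1 = b y2 → y1 < y2 →
      (I y1).card < (I y2).card := by
    intro y1 y2 h1 h2 hbeq hlt
    have hsub : I y1 ⊆ I y2 := by
      intro z hz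
      obtain ⟨hzu, hbz, hz1, hz2, hzx⟩ := Finset.mem_filter.mp hz
      refine Finset.mem_filter.mpr ⟨hzu, ?_, ?_, ?_, hzx⟩
      · rw [hbz, hbeq]
      · rw [min_eq_left h2.le]
        rw [min_eq_left h1.le] at hz1
        exact hz1
      · rw [max_eq_right h2.le]
        rw [max_eq_right h1.le] at hz2
        exact hz2.trans hlt.le
    have hy2mem : y2 ∈ I y2 := hyI y2 h2.ne'
    have hy2nmem : y2 ∉ I y1 := by
      intro hcon
      obtain ⟨_, _, _, hz2, _⟩ := Finset.mem_filter.mp hcon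
      rw [max_eq_right h1.le] at hz2
      exact absurd hz2 (not_le.mpr hlt)
    exact Finset.card_lt_card ((Finset.ssubset_iff_of_subset hsub).mpr ⟨y2, hy2mem, hy2nmem⟩)
  have hmono_left : ∀ y1 y2 : Fin n, y1 < x → y2 < x → b y1 = b y2 → y1 < y2 →
      (I y2).card < (I y1).card := by
    intro y1 y2 h1 h2 hbeq hlt
    have hsub : I y2 ⊆ I y1 := by
      intro z hz
      obtain ⟨hzu, hbz, hz1, hz2, hzx⟩ := Finset.mem_filter.mp hz
      refine Finset.mem_filter.mpr ⟨hzu, ?_, ?_, ?_, hzx⟩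
      · rw [hbz, ← hbeq]
      · rw [min_eq_right h1.le]
        rw [min_eq_right h2.le] at hz1
        exact hlt.le.trans hz1
      · rw [max_eq_left h1.le]
        rw [max_eq_left h2.le] at hz2
        exact hz2
    have hy1mem : y1 ∈ I y1 := hyI y1 (ne_of_lt h1)
    have hy1nmem : y1 ∉ I y2 := by
      intro hcon
      obtain ⟨_, _, hz1, _, _⟩ := Finset.mem_filter.mp hcon
      rw [min_eq_right h2.le] at hz1
      exact absurd hz1 (not_le.mpr hlt)
    exact Finset.card_lt_card ((Finset.ssubset_iff_of_subset hsub).mpr ⟨y1, hy1mem, hy1nmem⟩)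
  -- assemble the sum
  set B : Fin n → Prop := fun y => ∃ z : Fin n, (min x y ≤ z ∧ z ≤ max x y) ∧ b y < b z with hB
  have e1 : ∑ y : Fin n, T y = T x + ∑ y ∈ Finset.univ.erase x, T y :=
    (Finset.add_sum_erase Finset.univ T (Finset.mem_univ x)).symm
  have e2 : ∑ y ∈ Finset.univ.erase x, T y =
      ∑ y ∈ (Finset.univ.erase x).filter B, T y +
      ∑ y ∈ (Finset.univ.erase x).filter (fun y => ¬ B y), T y :=
    (Finset.sum_filter_add_sum_filter_not _ _ _).symm
  have e3 : ∑ y ∈ (Finset.univ.erase x).filter B, T y = 0 :=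
    Finset.sum_eq_zero (fun y hy => hblocked y (Finset.mem_filter.mp hy).2)
  set U := (Finset.univ.erase x).filter (fun y => ¬ B y) with hU
  have e4 : ∑ y ∈ U, T y =
      ∑ y ∈ U.filter (fun y => 1 ≤ b y), T y +
      ∑ y ∈ U.filter (fun y => ¬ (1 ≤ b y)), T y :=
    (Finset.sum_filter_add_sum_filter_not _ _ _).symm
  have b2 : ∑ y ∈ U.filter (fun y => 1 ≤ b y), T y ≤ 1 := by
    have hsubf : U.filter (fun y => 1 ≤ b y) ⊆ Finset.univ.filter (fun z : Fin n => 1 ≤ b z) := by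
      intro y hy
      exact Finset.mem_filter.mpr ⟨Finset.mem_univ y, (Finset.mem_filter.mp hy).2⟩
    calc ∑ y ∈ U.filter (fun y => 1 ≤ b y), T y
        ≤ ∑ _y ∈ U.filter (fun y => 1 ≤ b y), (1:ℝ) :=
          Finset.sum_le_sum (fun y _ => hT1 y)
      _ = ((U.filter (fun y => 1 ≤ b y)).card : ℝ) := by simp
      _ ≤ ((Finset.univ.filter (fun z : Fin n => 1 ≤ b z)).card : ℝ) := by
          exact_mod_cast Finset.card_le_card hsubf
      _ ≤ 1 := by exact_mod_cast hhigh
  set W := U.filter (fun y => ¬ (1 ≤ b y)) with hW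
  have hWprop : ∀ y ∈ W, y ≠ x ∧ ¬ B y ∧ b y ≤ 0 ∧ b x ≤ b y := by
    intro y hy
    obtain ⟨hyU, hby⟩ := Finset.mem_filter.mp hy
    obtain ⟨hyE, hnB⟩ := Finset.mem_filter.mp hyU
    have hyx := Finset.ne_of_mem_erase hyE
    refine ⟨hyx, hnB, by omega, ?_⟩
    by_contra hcon
    exact hnB ⟨x, ⟨min_le_left x y, le_max_left x y⟩, by omega⟩
  have b3 : ∑ y ∈ W, T y ≤
      ∑ t ∈ Finset.Icc (b x) 0, (2 * (1 + (2:ℝ)^((1:ℝ)-(t:ℝ)) * Real.log 2)) := by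
    have hmaps : ∀ y ∈ W, b y ∈ Finset.Icc (b x) 0 := fun y hy =>
      Finset.mem_Icc.mpr ⟨(hWprop y hy).2.2.2, (hWprop y hy).2.2.1⟩
    rw [← Finset.sum_fiberwise_of_maps_to hmaps T]
    apply Finset.sum_le_sum
    intro t _
    have hmemW : ∀ y ∈ W.filter (fun y => b y = t), y ∈ W :=
      fun y hy => (Finset.mem_filter.mp hy).1
    have hbt : ∀ y ∈ W.filter (fun y => b y = t), b y = t :=
      fun y hy => (Finset.mem_filter.mp hy).2
    have hr1 : ∀ y ∈ W.filter (fun y => b y = t), 1 ≤ (I y).card ∧ (I y).card ≤ N t := by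
      intro y hy
      constructor
      · exact Finset.card_pos.mpr ⟨y, hyI y (hWprop y (hmemW y hy)).1⟩
      · rw [← hbt y hy]; exact hIcard y
    calc ∑ y ∈ W.filter (fun y => b y = t), T y
        ≤ ∑ y ∈ W.filter (fun y => b y = t), (1:ℝ)/((I y).card) :=
          Finset.sum_le_sum (fun y hy => hrank y (hWprop y (hmemW y hy)).1)
      _ = ∑ y ∈ (W.filter (fun y => b y = t)).filter (fun y => y < x), (1:ℝ)/((I y).card)
          + ∑ y ∈ (W.filter (fun y => b y = t)).filter (fun y => ¬ y < x),
              (1:ℝ)/((I y).card) :=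
          (Finset.sum_filter_add_sum_filter_not _ _ _).symm
      _ ≤ (1 + Real.log (N t)) + (1 + Real.log (N t)) := by
          have hxlt : ∀ y ∈ (W.filter (fun y => b y = t)).filter (fun y => ¬ y < x), x < y := by
            intro y hy
            obtain ⟨hy1, hy2⟩ := Finset.mem_filter.mp hy
            have hyx : y ≠ x := (hWprop y (hmemW y hy1)).1
            omega
          apply add_le_add
          · apply side_sum _ (fun y => (I y).card) (N t)
            · intro y hy
              exact hr1 y (Finset.mem_filter.mp hy).1
            · intro y1 hy1 y2 hy2 hr
              obtain ⟨hy1W, hy1lt⟩ := Finset.mem_filter.mp hy1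
              obtain ⟨hy2W, hy2lt⟩ := Finset.mem_filter.mp hy2
              have hbeq : b y1 = b y2 := by rw [hbt y1 hy1W, hbt y2 hy2W]
              by_contra hne
              rcases lt_or_gt_of_ne hne with hlt | hlt
              · exact absurd hr (ne_of_gt (hmono_left y1 y2 hy1lt hy2lt hbeq hlt))
              · exact absurd hr (ne_of_lt (hmono_left y2 y1 hy2lt hy1lt hbeq.symm hlt))
          · apply side_sum _ (fun y => (I y).card) (N t)
            · intro y hy
              exact hr1 y (Finset.mem_filter.mp hy).1
            · intro y1 hy1 y2 hy2 hr
              obtain ⟨hy1W, _⟩ := Finset.mem_filter.mp hy1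
              obtain ⟨hy2W, _⟩ := Finset.mem_filter.mp hy2
              have hx1 := hxlt y1 hy1
              have hx2 := hxlt y2 hy2
              have hbeq : b y1 = b y2 := by rw [hbt y1 hy1W, hbt y2 hy2W]
              by_contra hne
              rcases lt_or_gt_of_ne hne with hlt | hlt
              · exact absurd hr (ne_of_lt (hmono_right y1 y2 hx1 hx2 hbeq hlt))
              · exact absurd hr (ne_of_gt (hmono_right y2 y1 hx2 hx1 hbeq.symm hlt))
      _ ≤ 2 * (1 + (2:ℝ)^((1:ℝ)-(t:ℝ)) * Real.log 2) := by
          have := hlogN t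
          linarith
  have b1 : T x ≤ 1 := hT1 x
  -- total bound
  have htot : ∑ y : Fin n, T y ≤ 2 +
      ∑ t ∈ Finset.Icc (b x) 0, (2 * (1 + (2:ℝ)^((1:ℝ)-(t:ℝ)) * Real.log 2)) := by
    rw [e1, e2, e3, e4]
    have := b2
    have := b3
    linarith
  -- bound the Icc sum, by cases on b x
  have hfinal : ∑ y : Fin n, T y ≤ 100 * (1 + Real.log ((m:ℝ)/(f x:ℝ))) := by
    rcases le_or_gt (b x) 0 with hbx | hbx
    · -- b x ≤ 0
      set k : ℕ := (-(b x)).toNat with hk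
      have hkbx : b x = -(k:ℤ) := by
        rw [hk]; omega
      have hIccsum : ∑ t ∈ Finset.Icc (b x) 0, (2 * (1 + (2:ℝ)^((1:ℝ)-(t:ℝ)) * Real.log 2))
          ≤ 12 * 2^k := by
        rw [hkbx]
        have hrw2 : ∀ t ∈ Finset.Icc (-(k:ℤ)) 0,
            2 * (1 + (2:ℝ)^((1:ℝ)-(t:ℝ)) * Real.log 2)
            = 2 + (2*Real.log 2) * (2:ℝ)^((1:ℝ)-(t:ℝ)) := by
          intro t _; ring
        rw [Finset.sum_congr rfl hrw2, Finset.sum_add_distrib, Finset.sum_const,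
          ← Finset.mul_sum]
        have hcard : (Finset.Icc (-(k:ℤ)) 0).card = k + 1 := by
          rw [Int.card_Icc]
          omega
        rw [hcard]
        have hg := geom_sum k
        have hlog2 : Real.log 2 < 0.6931471808 := Real.log_two_lt_d9
        have hlog2' : 0 < Real.log 2 := Real.log_pos one_lt_two
        have hk2 : (k:ℝ) + 1 ≤ 2^k := by
          exact_mod_cast Nat.lt_two_pow_self (n := k)
        have h2kpos : (0:ℝ) < 2^k := by positivity
        have hgle : (2*Real.log 2) * (∑ t ∈ Finset.Icc (-(k:ℤ)) 0, (2:ℝ)^((1:ℝ)-(t:ℝ)))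
            ≤ (2*Real.log 2) * (4 * 2^k) := by
          apply mul_le_mul_of_nonneg_left hg (by positivity)
        have hsmul : ((k+1) • (2:ℝ)) = ((k:ℝ)+1) * 2 := by
          rw [nsmul_eq_mul]; push_cast; ring
        rw [hsmul]
        nlinarith
      rcases Nat.eq_zero_or_pos k with hk0 | hkpos
      · -- k = 0 : constant bound
        rw [hk0] at hIccsum
        norm_num at hIccsum
        calc ∑ y : Fin n, T y ≤ 2 + ∑ t ∈ Finset.Icc (b x) 0,
              (2 * (1 + (2:ℝ)^((1:ℝ)-(t:ℝ)) * Real.log 2)) := htot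
          _ ≤ 2 + 12 := by linarith
          _ ≤ 100 * (1 + Real.log ((m:ℝ)/(f x:ℝ))) := by linarith
      · -- k ≥ 1 : relate 2^k to log
        have hfloor : ⌊Real.logb 2 (Real.logb 2 ((m:ℝ)/(f x:ℝ)))⌋ = (k:ℤ) := by
          have : b x = -⌊Real.logb 2 (Real.logb 2 ((m:ℝ)/(f x:ℝ)))⌋ := rfl
          omega
        set u := Real.logb 2 (Real.logb 2 ((m:ℝ)/(f x:ℝ))) with hu
        have hfl := Int.floor_le u
        rw [hfloor] at hfl
        have hku : (k:ℝ) ≤ u := by exact_mod_cast hfl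
        have hu1 : (1:ℝ) ≤ u := by
          have : (1:ℝ) ≤ (k:ℝ) := by exact_mod_cast hkpos
          linarith
        have hv0 : 0 ≤ Real.logb 2 ((m:ℝ)/(f x:ℝ)) :=
          Real.logb_nonneg one_lt_two (hl1 x)
        have hvpos : 0 < Real.logb 2 ((m:ℝ)/(f x:ℝ)) := by
          rcases eq_or_lt_of_le hv0 with h | h
          · exfalso
            have : u = 0 := by rw [hu, ← h, Real.logb_zero]
            rw [this] at hfl
            have : (k:ℝ) ≤ 0 := hfl
            have : (0:ℝ) < k := by exact_mod_cast hkpos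
            linarith
          · exact h
        have h2k : (2:ℝ)^k ≤ Real.logb 2 ((m:ℝ)/(f x:ℝ)) := by
          have h1 : (2:ℝ)^((k:ℝ)) ≤ (2:ℝ)^u :=
            (Real.rpow_le_rpow_left_iff one_lt_two).mpr hku
          rw [hu] at h1
          rw [Real.rpow_logb two_pos (by norm_num) hvpos] at h1
          rw [← Real.rpow_natCast 2 k]
          exact h1
        have hlogb_le : Real.logb 2 ((m:ℝ)/(f x:ℝ)) ≤ 2 * Real.log ((m:ℝ)/(f x:ℝ)) := by
          rw [Real.logb, div_le_iff₀ (Real.log_pos one_lt_two)]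
          nlinarith [Real.log_two_gt_d9, hlogx]
        calc ∑ y : Fin n, T y ≤ 2 + ∑ t ∈ Finset.Icc (b x) 0,
              (2 * (1 + (2:ℝ)^((1:ℝ)-(t:ℝ)) * Real.log 2)) := htot
          _ ≤ 2 + 12 * 2^k := by linarith
          _ ≤ 2 + 12 * (2 * Real.log ((m:ℝ)/(f x:ℝ))) := by
              have := h2k.trans hlogb_le
              linarith
          _ ≤ 100 * (1 + Real.log ((m:ℝ)/(f x:ℝ))) := by linarith
    · -- 0 < b x : the Icc is empty
      have hempty : Finset.Icc (b x) 0 = ∅ := Finset.Icc_eq_empty (by omega)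
      rw [hempty, Finset.sum_empty] at htot
      calc ∑ y : Fin n, T y ≤ 2 + 0 := by linarith
        _ ≤ 100 * (1 + Real.log ((m:ℝ)/(f x:ℝ))) := by linarith
  calc ∑ y : Fin n, (μpi n (A c x y)).toReal = ∑ y : Fin n, T y := rfl
    _ ≤ 100 * (1 + Real.log ((m:ℝ)/(f x:ℝ))) := hfinal

end Stmt5Aux

/-- **Static Optimality.** With frequencies `f : [n] → ℕ₊`, `∑ f = m`, and
priorities `pri_x = −⌊log₂ log₂(m/f_x)⌋ + δ_x` (`δ_x` i.i.d. uniform on `(0,1)`), each item `x`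
has expected depth `O(log(m/f_x))`, hence the expected total access cost
`∑_x f_x·E[depth(x)]` is `O(∑_x f_x log(m/f_x))`. -/
theorem stmt5 : ∃ c : ℝ, 0 < c ∧
    ∀ (n m : ℕ) (f : Fin n → ℕ), (∀ x, 1 ≤ f x) → (∑ x, f x) = m →
      (∀ x : Fin n,
        (∫ δ : Fin n → ℝ,
            (treapDepth n
              (fun y => -((⌊Real.logb 2 (Real.logb 2 ((m : ℝ) / (f y : ℝ)))⌋ : ℤ) : ℝ) + δ y) x : ℝ)
            ∂(Measure.pi fun _ : Fin n => volume.restrict (Set.Icc (0 : ℝ) 1)))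
          ≤ c * (1 + Real.log ((m : ℝ) / (f x : ℝ))))
      ∧ (∑ x : Fin n, (f x : ℝ) *
            ∫ δ : Fin n → ℝ,
              (treapDepth n
                (fun y => -((⌊Real.logb 2 (Real.logb 2 ((m : ℝ) / (f y : ℝ)))⌋ : ℤ) : ℝ) + δ y) x : ℝ)
              ∂(Measure.pi fun _ : Fin n => volume.restrict (Set.Icc (0 : ℝ) 1)))
          ≤ c * ∑ x : Fin n, (f x : ℝ) * (1 + Real.log ((m : ℝ) / (f x : ℝ))) := by
  refine ⟨100, by norm_num, ?_⟩
  intro n m f hf hm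
  have hmain : ∀ x : Fin n,
      (∫ δ : Fin n → ℝ,
          (treapDepth n
            (fun y => -((⌊Real.logb 2 (Real.logb 2 ((m : ℝ) / (f y : ℝ)))⌋ : ℤ) : ℝ) + δ y) x : ℝ)
          ∂(Measure.pi fun _ : Fin n => volume.restrict (Set.Icc (0 : ℝ) 1)))
        ≤ 100 * (1 + Real.log ((m : ℝ) / (f x : ℝ))) := by
    intro x
    have h1 := Stmt5Aux.integral_eq_sum (n := n)
      (fun y => -((⌊Real.logb 2 (Real.logb 2 ((m : ℝ) / (f y : ℝ)))⌋ : ℤ) : ℝ)) x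
    have h2 := Stmt5Aux.sum_bound f hf hm x
    exact h1.trans_le h2
  refine ⟨hmain, ?_⟩
  calc ∑ x : Fin n, (f x : ℝ) *
          ∫ δ : Fin n → ℝ,
            (treapDepth n
              (fun y => -((⌊Real.logb 2 (Real.logb 2 ((m : ℝ) / (f y : ℝ)))⌋ : ℤ) : ℝ) + δ y) x : ℝ)
            ∂(Measure.pi fun _ : Fin n => volume.restrict (Set.Icc (0 : ℝ) 1))
      ≤ ∑ x : Fin n, (f x : ℝ) * (100 * (1 + Real.log ((m : ℝ) / (f x : ℝ)))) := by
        apply Finset.sum_le_sum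
        intro x _
        exact mul_le_mul_of_nonneg_left (hmain x) (by positivity)
    _ = 100 * ∑ x : Fin n, (f x : ℝ) * (1 + Real.log ((m : ℝ) / (f x : ℝ))) := by
        rw [Finset.mul_sum]
        apply Finset.sum_congr rfl
        intro x _
        ring
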